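/- Let E be an elliptic curve over a complete discretely valued field K of characteristic 0 with supersingular reduction, e = v_K(p). Let a(Ê) be the coefficient of T^p in the multiplication-by-p series [p](T) of the formal group Ê. If v_K(a(Ê)) ≥ pe/(p+1), then every nonzero p-torsion point x ∈ Ê[p] of the formal group satisfies v_K(x) = e/(p²−1). -/

import Mathlib

/-- Data of a normalized discrete (additive) valuation on a field `K`:
`v : K → ℤ ∪ {∞}` with `v(x) = ∞ ↔ x = 0`, multiplicative, ultrametric and surjective
(so `K` is a discrete valuation field, `O_K = {v ≥ 0}`, `m_K = {v > 0}`). -/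
structure DVF (K : Type) [Field K] where
  v : K → WithTop ℤ
  v_top_iff : ∀ x : K, v x = ⊤ ↔ x = 0
  v_mul : ∀ x y : K, v (x * y) = v x + v y
  v_add : ∀ x y : K, min (v x) (v y) ≤ v (x + y)
  v_surj : ∀ n : ℤ, ∃ x : K, v x = (n : WithTop ℤ)

namespace DVF

variable {K : Type} [Field K] (V : DVF K)

/-- The sequence `s` converges to `L` in the valuation topology of `V`. -/
def Tendsto (s : ℕ → K) (L : K) : Prop :=
  ∀ N : ℤ, ∃ M : ℕ, ∀ m : ℕ, M ≤ m → (N : WithTop ℤ) ≤ V.v (s m - L)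

/-- `K` is complete with respect to the valuation `V`: every Cauchy sequence converges. -/
def IsComplete : Prop :=
  ∀ s : ℕ → K,
    (∀ N : ℤ, ∃ M : ℕ, ∀ m k : ℕ, M ≤ m → M ≤ k → (N : WithTop ℤ) ≤ V.v (s m - s k)) →
    ∃ L : K, V.Tendsto s L

/-- The residue field `O_K/m_K` (of characteristic `p`) is perfect:
every residue class is a `p`-th power. -/
def ResiduePerfect (p : ℕ) : Prop :=
  ∀ x : K, 0 ≤ V.v x → ∃ y : K, 0 ≤ V.v y ∧ 0 < V.v (x - y ^ p)

/-- The residue field `O_K/m_K` is finite. -/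
def ResidueFinite : Prop :=
  ∃ S : Finset K, ∀ x : K, 0 ≤ V.v x → ∃ y ∈ S, 0 < V.v (x - y)

/-- `K` is Henselian: simple roots of integral polynomials lift from the residue field. -/
def IsHenselian : Prop :=
  ∀ f : Polynomial K, (∀ i : ℕ, 0 ≤ V.v (f.coeff i)) →
    ∀ a : K, 0 ≤ V.v a → 0 < V.v (f.eval a) → V.v (f.derivative.eval a) = 0 →
      ∃ b : K, f.eval b = 0 ∧ 0 < V.v (b - a)

end DVF

/-- `y` is the value of the one-variable power series `φ` at `x` (limit of partial sums). -/
def PSEval {K : Type} [Field K] (V : DVF K) (φ : PowerSeries K) (x y : K) : Prop :=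
  V.Tendsto (fun n => ∑ i ∈ Finset.range n, PowerSeries.coeff (R := K) i φ * x ^ i) y

/-- `z` is the value of the two-variable power series `F` at `(x, y)`. -/
def FEval {K : Type} [Field K] (V : DVF K) (F : MvPowerSeries (Fin 2) K) (x y z : K) : Prop :=
  V.Tendsto (fun n => ∑ i ∈ Finset.range n, ∑ j ∈ Finset.range n,
    MvPowerSeries.coeff (R := K) (Finsupp.single 0 i + Finsupp.single 1 j) F * x ^ i * y ^ j) z

/-- A one-dimensional commutative formal group law `F(X,Y)` over the valuation ring `O_K`
(integral coefficients, `F ≡ X + Y` mod degree 2, commutative and associative;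
associativity `F(F(X,Y),Z) = F(X,F(Y,Z))` is written out coefficientwise). -/
structure FGL (K : Type) [Field K] (V : DVF K) where
  F : MvPowerSeries (Fin 2) K
  int_coeff : ∀ d : Fin 2 →₀ ℕ, 0 ≤ V.v (MvPowerSeries.coeff (R := K) d F)
  const : MvPowerSeries.coeff (R := K) 0 F = 0
  linX : MvPowerSeries.coeff (R := K) (Finsupp.single 0 1) F = 1
  linY : MvPowerSeries.coeff (R := K) (Finsupp.single 1 1) F = 1
  comm : ∀ d : Fin 2 →₀ ℕ,
    MvPowerSeries.coeff (R := K) d F = MvPowerSeries.coeff (R := K) (Finsupp.equivMapDomain (Equiv.swap 0 1) d) F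
  assoc : ∀ i j l : ℕ,
    (∑ k ∈ Finset.range (i + j + 1),
      MvPowerSeries.coeff (R := K) (Finsupp.single 0 k + Finsupp.single 1 l) F *
        MvPowerSeries.coeff (R := K) (Finsupp.single 0 i + Finsupp.single 1 j) (F ^ k)) =
    (∑ k ∈ Finset.range (j + l + 1),
      MvPowerSeries.coeff (R := K) (Finsupp.single 0 i + Finsupp.single 1 k) F *
        MvPowerSeries.coeff (R := K) (Finsupp.single 0 j + Finsupp.single 1 l) (F ^ k))

/-- An isogeny `φ : F → G` of formal groups over `O_K`: a nonzero integral power series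
with `φ(0) = 0` and `φ(F(X,Y)) = G(φ(X),φ(Y))` (written out coefficientwise). -/
structure Isog {K : Type} [Field K] (V : DVF K) (Fg Gg : FGL K V) where
  φ : PowerSeries K
  ne_zero : φ ≠ 0
  int_coeff : ∀ i : ℕ, 0 ≤ V.v (PowerSeries.coeff (R := K) i φ)
  const : PowerSeries.coeff (R := K) 0 φ = 0
  hom : ∀ i j : ℕ,
    (∑ k ∈ Finset.range (i + j + 1),
      PowerSeries.coeff (R := K) k φ *
        MvPowerSeries.coeff (R := K) (Finsupp.single 0 i + Finsupp.single 1 j) (Fg.F ^ k)) =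
    (∑ k ∈ Finset.range (i + j + 1), ∑ l ∈ Finset.range (i + j + 1),
      MvPowerSeries.coeff (R := K) (Finsupp.single 0 k + Finsupp.single 1 l) Gg.F *
        PowerSeries.coeff (R := K) i (φ ^ k) * PowerSeries.coeff (R := K) j (φ ^ l))

/-- The power series `φ` has height `n`: `φ(T) ≡ ψ(T^{p^n}) (mod m_K)`
for some integral `ψ` with `v(ψ'(0)) = 0`. -/
def HasHeight {K : Type} [Field K] (V : DVF K) (p n : ℕ) (φ : PowerSeries K) : Prop :=
  ∃ ψ : PowerSeries K, (∀ i : ℕ, 0 ≤ V.v (PowerSeries.coeff (R := K) i ψ)) ∧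
    V.v (PowerSeries.coeff (R := K) 1 ψ) = 0 ∧
    ∀ j : ℕ, 0 < V.v (PowerSeries.coeff (R := K) j φ -
      (if p ^ n ∣ j then PowerSeries.coeff (R := K) (j / p ^ n) ψ else 0))

/-- Evaluation of a one-variable power series over `K` at a point of a valued extension
field `L` (coefficients transported along `ι`). -/
def PSEvalExt {K L : Type} [Field K] [Field L] (W : DVF L) (ι : K →+* L)
    (φ : PowerSeries K) (x y : L) : Prop :=
  W.Tendsto (fun n => ∑ i ∈ Finset.range n, ι (PowerSeries.coeff (R := K) i φ) * x ^ i) y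

/-- Evaluation of a two-variable power series over `K` at points of a valued extension
field `L`. -/
def FEvalExt {K L : Type} [Field K] [Field L] (W : DVF L) (ι : K →+* L)
    (F : MvPowerSeries (Fin 2) K) (x y z : L) : Prop :=
  W.Tendsto (fun n => ∑ i ∈ Finset.range n, ∑ j ∈ Finset.range n,
    ι (MvPowerSeries.coeff (R := K) (Finsupp.single 0 i + Finsupp.single 1 j) F) * x ^ i * y ^ j) z

-- ===== Section 1: DVF basics =====
namespace DVF

variable {K : Type} [Field K] (V : DVF K)

lemma v_zero : V.v 0 = ⊤ := (V.v_top_iff 0).2 rfl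

lemma v_one : V.v 1 = 0 := by
  have h := V.v_mul 1 1
  rw [mul_one] at h
  have h1 : V.v 1 ≠ ⊤ := fun h' => one_ne_zero ((V.v_top_iff 1).1 h')
  obtain ⟨a, ha⟩ := WithTop.ne_top_iff_exists.mp h1
  rw [← ha] at h ⊢
  have : a = a + a := by exact_mod_cast h
  have : a = 0 := by omega
  simp [this]

lemma v_neg (x : K) : V.v (-x) = V.v x := by
  have hm : V.v (-1 : K) = 0 := by
    have h := V.v_mul (-1 : K) (-1)
    rw [neg_mul, one_mul, neg_neg, V.v_one] at h
    have h1 : V.v (-1 : K) ≠ ⊤ := fun h' => by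
      have : (-1 : K) = 0 := (V.v_top_iff _).1 h'
      norm_num at this
    obtain ⟨a, ha⟩ := WithTop.ne_top_iff_exists.mp h1
    rw [← ha] at h ⊢
    have : (0 : ℤ) = a + a := by exact_mod_cast h
    have : a = 0 := by omega
    simp [this]
  calc V.v (-x) = V.v ((-1) * x) := by ring_nf
  _ = V.v (-1 : K) + V.v x := V.v_mul _ _
  _ = V.v x := by rw [hm, zero_add]

lemma v_sub_ge (x y : K) : min (V.v x) (V.v y) ≤ V.v (x - y) := by
  rw [sub_eq_add_neg, ← V.v_neg y]
  exact V.v_add _ _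

lemma v_add_eq_left {x y : K} (h : V.v x < V.v y) : V.v (x + y) = V.v x := by
  have hle : V.v x ≤ V.v (x + y) := by
    have := V.v_add x y
    rwa [min_eq_left h.le] at this
  refine le_antisymm ?_ hle
  by_contra hc
  push_neg at hc
  have h2 : V.v x < V.v ((x + y) - y) := by
    calc V.v x < min (V.v (x+y)) (V.v y) := lt_min hc h
    _ ≤ _ := V.v_sub_ge _ _
  simp at h2

lemma v_sum_ge {ι : Type*} (s : Finset ι) (f : ι → K) (A : WithTop ℤ)
    (h : ∀ i ∈ s, A ≤ V.v (f i)) : A ≤ V.v (∑ i ∈ s, f i) := by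
  classical
  induction s using Finset.cons_induction with
  | empty => simp [V.v_zero]
  | cons a s' ha ih =>
    rw [Finset.sum_cons]
    exact le_trans (le_min (h a (by simp)) (ih fun i hi => h i (by simp [hi]))) (V.v_add _ _)

lemma v_natCast_nonneg (n : ℕ) : 0 ≤ V.v (n : K) := by
  induction n with
  | zero => simp [V.v_zero]
  | succ m ih =>
    push_cast
    refine le_trans (le_min ih (le_of_eq V.v_one.symm)) (V.v_add _ _)

lemma v_intCast_nonneg (n : ℤ) : 0 ≤ V.v (n : K) := by
  rcases n.natAbs_eq with h | h
  · rw [h, Int.cast_natCast]; exact V.v_natCast_nonneg _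
  · rw [h, Int.cast_neg, V.v_neg, Int.cast_natCast]; exact V.v_natCast_nonneg _

lemma v_natCast_coprime {p n : ℕ} (hp : p.Prime) (hres : 0 < V.v (p : K))
    (hn : ¬ p ∣ n) : V.v (n : K) = 0 := by
  refine le_antisymm ?_ (V.v_natCast_nonneg n)
  have hcop : IsCoprime (p : ℤ) (n : ℤ) :=
    Nat.isCoprime_iff_coprime.mpr ((hp.coprime_iff_not_dvd).mpr hn)
  obtain ⟨u, w, huw⟩ := hcop
  have h1 : V.v ((u : K) * (p:K) + (w : K) * (n : K)) = 0 := by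
    have : (u : K) * (p:K) + (w : K) * (n : K) = 1 := by
      have := congrArg (fun z : ℤ => (z : K)) huw
      push_cast at this
      simpa using this
    rw [this, V.v_one]
  have h2 : 0 < V.v ((u:K) * (p:K)) := by
    rw [V.v_mul]
    have := V.v_intCast_nonneg u
    calc (0 : WithTop ℤ) < V.v (p:K) := hres
    _ ≤ V.v (u:K) + V.v (p:K) := le_add_of_nonneg_left this
  have h3 : min (V.v ((u:K)*(p:K))) (V.v ((w:K)*(n:K))) ≤ 0 := h1 ▸ V.v_add _ _
  have h4 : V.v ((w:K)*(n:K)) ≤ 0 := by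
    rcases min_le_iff.mp h3 with h | h
    · exact absurd (lt_of_lt_of_le h2 h) (by simp)
    · exact h
  rw [V.v_mul] at h4
  have := V.v_intCast_nonneg w
  calc V.v (n:K) ≤ V.v (w:K) + V.v (n:K) := le_add_of_nonneg_left this
  _ ≤ 0 := h4

lemma v_pow {x : K} {t : ℤ} (h : V.v x = (t : WithTop ℤ)) (n : ℕ) :
    V.v (x ^ n) = ((n * t : ℤ) : WithTop ℤ) := by
  induction n with
  | zero => simp [V.v_one]
  | succ m ih =>
    rw [pow_succ, V.v_mul, ih, h, ← WithTop.coe_add, WithTop.coe_inj]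
    push_cast; ring

end DVF

-- smul coercion helpers
lemma nsmul_coe_int (r : ℕ) (a : ℤ) :
    r • ((a : ℤ) : WithTop ℤ) = ((r * a : ℤ) : WithTop ℤ) := by
  induction r with
  | zero => simp
  | succ m ih =>
    rw [succ_nsmul, ih, ← WithTop.coe_add, WithTop.coe_inj]
    push_cast; ring

lemma nsmul_top (r : ℕ) (hr : 0 < r) : r • (⊤ : WithTop ℤ) = ⊤ := by
  induction r with
  | zero => omega
  | succ m ih =>
    rcases Nat.eq_zero_or_pos m with h | h
    · simp [h]
    · rw [succ_nsmul, ih h]; simp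
-- ===== Section 2: Fin 2 →₀ ℕ helpers =====
open Finset

noncomputable def pr (a b : ℕ) : Fin 2 →₀ ℕ := Finsupp.single 0 a + Finsupp.single 1 b

@[simp] lemma pr_apply0 (a b : ℕ) : pr a b 0 = a := by
  simp [pr, Finsupp.single_apply]

@[simp] lemma pr_apply1 (a b : ℕ) : pr a b 1 = b := by
  simp [pr, Finsupp.single_apply]

lemma eq_pr (d : Fin 2 →₀ ℕ) : d = pr (d 0) (d 1) := by
  ext x
  fin_cases x <;> simp [pr, Finsupp.single_apply]

lemma pr_add (a b c d : ℕ) : pr a b + pr c d = pr (a+c) (b+d) := by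
  ext x
  fin_cases x <;> simp [pr, Finsupp.single_apply]

lemma pr_eq_iff {a b c d : ℕ} : pr a b = pr c d ↔ a = c ∧ b = d := by
  constructor
  · intro h
    constructor
    · have := DFunLike.congr_fun h (0 : Fin 2); simpa using this
    · have := DFunLike.congr_fun h (1 : Fin 2); simpa using this
  · rintro ⟨rfl, rfl⟩; rfl

lemma pr_zero : pr 0 0 = 0 := by
  ext x; fin_cases x <;> simp [pr, Finsupp.single_apply]

lemma pr_eq_zero_iff {a b : ℕ} : pr a b = 0 ↔ a = 0 ∧ b = 0 := by
  rw [← pr_zero, pr_eq_iff]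

lemma sum_antidiagonal_pr {M : Type*} [AddCommMonoid M] (d : Fin 2 →₀ ℕ)
    (f : (Fin 2 →₀ ℕ) × (Fin 2 →₀ ℕ) → M) :
    ∑ q ∈ antidiagonal d, f q
      = ∑ q0 ∈ antidiagonal (d 0), ∑ q1 ∈ antidiagonal (d 1),
          f (pr q0.1 q1.1, pr q0.2 q1.2) := by
  rw [← Finset.sum_product']
  refine Finset.sum_nbij' (fun q => ((q.1 0, q.2 0), (q.1 1, q.2 1)))
    (fun z => (pr z.1.1 z.2.1, pr z.1.2 z.2.2)) ?_ ?_ ?_ ?_ ?_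
  · intro q hq
    rw [Finset.HasAntidiagonal.mem_antidiagonal] at hq
    rw [Finset.mem_product, Finset.HasAntidiagonal.mem_antidiagonal, Finset.HasAntidiagonal.mem_antidiagonal]
    constructor
    · have := DFunLike.congr_fun hq (0 : Fin 2); simpa using this
    · have := DFunLike.congr_fun hq (1 : Fin 2); simpa using this
  · intro z hz
    rw [Finset.mem_product, Finset.HasAntidiagonal.mem_antidiagonal, Finset.HasAntidiagonal.mem_antidiagonal] at hz
    rw [Finset.HasAntidiagonal.mem_antidiagonal, pr_add, hz.1, hz.2]
    exact (eq_pr d).symm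
  · intro q _
    exact Prod.ext (eq_pr q.1).symm (eq_pr q.2).symm
  · intro z _
    simp only [pr_apply0, pr_apply1]
  · intro q _
    exact congrArg f (Prod.ext (eq_pr q.1) (eq_pr q.2))

lemma sum_antidiag_single1 {M : Type*} [AddCommMonoid M] (b : ℕ) (f : ℕ → ℕ → M)
    (h : ∀ a c, a + c = b → a ≠ 1 → f a c = 0) :
    ∑ q ∈ antidiagonal b, f q.1 q.2 = if 1 ≤ b then f 1 (b-1) else 0 := by
  split_ifs with hb
  · apply Finset.sum_eq_single_of_mem (1, b-1)
    · rw [Finset.HasAntidiagonal.mem_antidiagonal]; omega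
    · rintro ⟨a, c⟩ hm hne
      rw [Finset.HasAntidiagonal.mem_antidiagonal] at hm
      refine h a c hm ?_
      intro h1
      exact hne (by simp only [Prod.mk.injEq]; omega)
  · have hb0 : b = 0 := by omega
    subst hb0
    rw [show (antidiagonal 0 : Finset (ℕ×ℕ)) = {(0,0)} from rfl, Finset.sum_singleton]
    exact h 0 0 rfl (by omega)

lemma sum_antidiag_single2 {M : Type*} [AddCommMonoid M] (b k : ℕ) (f : ℕ → ℕ → M)
    (h : ∀ a c, a + c = b → c ≠ k → f a c = 0) :
    ∑ q ∈ antidiagonal b, f q.1 q.2 = if k ≤ b then f (b-k) k else 0 := by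
  split_ifs with hb
  · apply Finset.sum_eq_single_of_mem (b-k, k)
    · rw [Finset.HasAntidiagonal.mem_antidiagonal]; omega
    · rintro ⟨a, c⟩ hm hne
      rw [Finset.HasAntidiagonal.mem_antidiagonal] at hm
      refine h a c hm ?_
      intro h1
      exact hne (by simp only [Prod.mk.injEq]; omega)
  · apply Finset.sum_eq_zero
    rintro ⟨a, c⟩ hm
    rw [Finset.HasAntidiagonal.mem_antidiagonal] at hm
    exact h a c hm (by omega)
-- ===== Section 3: coefficient slice lemmas =====
noncomputable def Fc {S : Type*} [CommRing S] (G : MvPowerSeries (Fin 2) S) (a b : ℕ) : S :=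
  MvPowerSeries.coeff (R := S) (pr a b) G

section Slices
variable {S : Type*} [CommRing S]

lemma Fc_mul (G H : MvPowerSeries (Fin 2) S) (a b : ℕ) :
    Fc (G * H) a b = ∑ q0 ∈ Finset.HasAntidiagonal.antidiagonal a, ∑ q1 ∈ Finset.HasAntidiagonal.antidiagonal b,
      Fc G q0.1 q1.1 * Fc H q0.2 q1.2 := by
  classical
  rw [Fc, MvPowerSeries.coeff_mul,
    sum_antidiagonal_pr (pr a b) (fun q => MvPowerSeries.coeff (R := S) q.1 G * MvPowerSeries.coeff (R := S) q.2 H)]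
  simp only [pr_apply0, pr_apply1]
  rfl

lemma Fc_one (a b : ℕ) : Fc (1 : MvPowerSeries (Fin 2) S) a b
    = if a = 0 ∧ b = 0 then 1 else 0 := by
  rw [Fc, MvPowerSeries.coeff_one]
  congr 1
  rw [eq_iff_iff, pr_eq_zero_iff]

lemma Fc_E0 {G : MvPowerSeries (Fin 2) S}
    (h0 : ∀ b, Fc G 0 b = if b = 1 then 1 else 0) :
    ∀ k b, Fc (G ^ k) 0 b = if b = k then 1 else 0 := by
  intro k
  induction k with
  | zero =>
    intro b
    rw [pow_zero, Fc_one]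
    by_cases hb : b = 0 <;> simp [hb]
  | succ k ih =>
    intro b
    rw [pow_succ, Fc_mul]
    rw [show (Finset.HasAntidiagonal.antidiagonal 0 : Finset (ℕ×ℕ)) = {((0:ℕ),(0:ℕ))} from rfl,
      Finset.sum_singleton]
    rw [sum_antidiag_single2 b 1 (fun a c => Fc (G^k) 0 a * Fc G 0 c)
      (fun a c hac hc => by show Fc (G^k) 0 a * Fc G 0 c = 0; rw [h0 c, if_neg hc, mul_zero])]
    by_cases hb : 1 ≤ b
    · rw [if_pos hb]
      show Fc (G^k) 0 (b-1) * Fc G 0 1 = _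
      rw [ih (b-1), h0 1, if_pos rfl, mul_one]
      by_cases hbk : b - 1 = k
      · rw [if_pos hbk, if_pos (by omega)]
      · rw [if_neg hbk, if_neg (by omega)]
    · rw [if_neg hb, if_neg (by omega)]

lemma Fc_E2 {G : MvPowerSeries (Fin 2) S}
    (h0 : ∀ b, Fc G 0 b = if b = 1 then 1 else 0) :
    ∀ k b, Fc (G ^ k) 1 b
      = if 1 ≤ k ∧ k ≤ b + 1 then (k : S) * Fc G 1 (b + 1 - k) else 0 := by
  intro k
  induction k with
  | zero =>
    intro b
    rw [pow_zero, Fc_one, if_neg (by omega), if_neg (by omega)]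
  | succ k ih =>
    intro b
    rw [pow_succ', Fc_mul]
    rw [show (Finset.HasAntidiagonal.antidiagonal 1 : Finset (ℕ×ℕ)) = {((0:ℕ),(1:ℕ)), ((1:ℕ),(0:ℕ))} from rfl]
    rw [Finset.sum_insert (by decide), Finset.sum_singleton]
    rw [sum_antidiag_single1 b (fun a c => Fc G 0 a * Fc (G^k) 1 c)
      (fun a c hac ha => by show Fc G 0 a * Fc (G^k) 1 c = 0; rw [h0 a, if_neg ha, zero_mul])]
    rw [sum_antidiag_single2 b k (fun a c => Fc G 1 a * Fc (G^k) 0 c)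
      (fun a c hac hc => by
        show Fc G 1 a * Fc (G^k) 0 c = 0
        rw [Fc_E0 h0 k c, if_neg hc, mul_zero])]
    by_cases hkb : k ≤ b
    · rw [if_pos hkb]
      show _ + Fc G 1 (b-k) * Fc (G^k) 0 k = _
      rw [Fc_E0 h0 k k, if_pos rfl, mul_one,
        if_pos (show 1 ≤ k+1 ∧ k+1 ≤ b+1 by omega),
        show b+1-(k+1) = b - k from by omega]
      by_cases hk : 1 ≤ k
      · rw [if_pos (show 1 ≤ b by omega)]
        show Fc G 0 1 * Fc (G^k) 1 (b-1) + _ = _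
        rw [h0 1, if_pos rfl, one_mul, ih (b-1), if_pos (by omega),
          show b-1+1-k = b-k from by omega]
        push_cast
        ring
      · have hk0 : k = 0 := by omega
        subst hk0
        by_cases hb : 1 ≤ b
        · rw [if_pos hb]
          show Fc G 0 1 * Fc (G ^ 0) 1 (b-1) + _ = _
          rw [ih (b-1), if_neg (by omega), mul_zero, zero_add]
          norm_num
        · rw [if_neg hb]
          norm_num
    · rw [if_neg hkb, if_neg (show ¬(1 ≤ k+1 ∧ k+1 ≤ b+1) by omega), add_zero]
      by_cases hb : 1 ≤ b
      · rw [if_pos hb]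
        show Fc G 0 1 * Fc (G^k) 1 (b-1) = 0
        rw [ih (b-1), if_neg (by omega), mul_zero]
      · rw [if_neg hb]

lemma Fc_X0a {G : MvPowerSeries (Fin 2) S} (h00 : Fc G 0 0 = 0) :
    ∀ k i, i < k → Fc (G ^ k) i 0 = 0 := by
  intro k
  induction k with
  | zero => intro i hi; omega
  | succ k ih =>
    intro i hi
    rw [pow_succ', Fc_mul]
    rw [show (Finset.HasAntidiagonal.antidiagonal 0 : Finset (ℕ×ℕ)) = {((0:ℕ),(0:ℕ))} from rfl]
    apply Finset.sum_eq_zero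
    rintro ⟨a, c⟩ hm
    rw [Finset.HasAntidiagonal.mem_antidiagonal] at hm
    rw [Finset.sum_singleton]
    show Fc G a 0 * Fc (G^k) c 0 = 0
    rcases Nat.eq_zero_or_pos a with ha | ha
    · subst ha; rw [h00, zero_mul]
    · rw [ih c (by omega), mul_zero]

lemma Fc_X0b {G : MvPowerSeries (Fin 2) S} (h00 : Fc G 0 0 = 0) :
    ∀ k, Fc (G ^ k) k 0 = (Fc G 1 0) ^ k := by
  intro k
  induction k with
  | zero =>
    rw [pow_zero, pow_zero, Fc_one, if_pos ⟨rfl, rfl⟩]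
  | succ k ih =>
    rw [pow_succ', Fc_mul]
    rw [show (Finset.HasAntidiagonal.antidiagonal 0 : Finset (ℕ×ℕ)) = {((0:ℕ),(0:ℕ))} from rfl]
    have key : ∀ q0 ∈ Finset.HasAntidiagonal.antidiagonal (k+1),
        (∑ q1 ∈ ({((0:ℕ),(0:ℕ))} : Finset (ℕ×ℕ)), Fc G q0.1 q1.1 * Fc (G^k) q0.2 q1.2)
        = if q0 = (1, k) then Fc G 1 0 * Fc (G^k) k 0 else 0 := by
      rintro ⟨a, c⟩ hm
      rw [Finset.HasAntidiagonal.mem_antidiagonal] at hm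
      rw [Finset.sum_singleton]
      show Fc G a 0 * Fc (G^k) c 0 = _
      split_ifs with h1
      · simp only [Prod.mk.injEq] at h1
        rw [h1.1, h1.2]
      · have hane : a ≠ 1 := by
          intro hae
          exact h1 (by simp only [Prod.mk.injEq]; omega)
        rcases Nat.eq_zero_or_pos a with ha | ha
        · subst ha; rw [h00, zero_mul]
        · rw [Fc_X0a h00 k c (by omega), mul_zero]
    rw [Finset.sum_congr rfl key, Finset.sum_ite_eq' _ ((1:ℕ),(k:ℕ)) _,
      if_pos (by rw [Finset.HasAntidiagonal.mem_antidiagonal]; omega), ih, pow_succ']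

end Slices

-- 1-variable power series lemmas
lemma ps_coeff_pow_lt {S : Type*} [CommRing S] {φ : PowerSeries S}
    (h0 : PowerSeries.coeff (R := S) 0 φ = 0) :
    ∀ l j, j < l → PowerSeries.coeff (R := S) j (φ ^ l) = 0 := by
  intro l
  induction l with
  | zero => intro j hj; omega
  | succ l ih =>
    intro j hj
    rw [pow_succ', PowerSeries.coeff_mul]
    apply Finset.sum_eq_zero
    rintro ⟨a, c⟩ hm
    rw [Finset.HasAntidiagonal.mem_antidiagonal] at hm
    rcases Nat.eq_zero_or_pos a with ha | ha
    · subst ha; rw [h0, zero_mul]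
    · rw [ih c (by omega), mul_zero]

namespace DVF
variable {K : Type} [Field K] (V : DVF K)

lemma v_coeff_pow_nonneg {φ : PowerSeries K}
    (h : ∀ i, 0 ≤ V.v (PowerSeries.coeff (R := K) i φ)) :
    ∀ l i, 0 ≤ V.v (PowerSeries.coeff (R := K) i (φ ^ l)) := by
  intro l
  induction l with
  | zero =>
    intro i
    rw [pow_zero, PowerSeries.coeff_one]
    split_ifs
    · rw [V.v_one]
    · rw [V.v_zero]; exact le_top
  | succ l ih =>
    intro i
    rw [pow_succ', PowerSeries.coeff_mul]
    apply V.v_sum_ge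
    rintro ⟨a, c⟩ _
    rw [V.v_mul]
    exact add_nonneg (h a) (ih c)

lemma v_coeff_mvpow_nonneg {G : MvPowerSeries (Fin 2) K}
    (h : ∀ d, 0 ≤ V.v (MvPowerSeries.coeff (R := K) d G)) :
    ∀ k d, 0 ≤ V.v (MvPowerSeries.coeff (R := K) d (G ^ k)) := by
  intro k
  induction k with
  | zero =>
    intro d
    rw [pow_zero, MvPowerSeries.coeff_one]
    split_ifs
    · rw [V.v_one]
    · rw [V.v_zero]; exact le_top
  | succ l ih =>
    intro d
    classical
    rw [pow_succ', MvPowerSeries.coeff_mul]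
    apply V.v_sum_ge
    rintro ⟨a, c⟩ _
    rw [V.v_mul]
    exact add_nonneg (h a) (ih c)

end DVF
-- ===== Section 4: FGL facts =====
section FGLfacts
variable {K : Type} [Field K] {V : DVF K} (Eg : FGL K V)

lemma FGL_g00 : Fc Eg.F 0 0 = 0 := by
  rw [Fc, pr_zero]; exact Eg.const

lemma FGL_g10 : Fc Eg.F 1 0 = 1 := by
  rw [Fc, show pr 1 0 = Finsupp.single 0 1 from by rw [pr, Finsupp.single_zero, add_zero]]
  exact Eg.linX

lemma FGL_g01 : Fc Eg.F 0 1 = 1 := by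
  rw [Fc, show pr 0 1 = Finsupp.single 1 1 from by rw [pr, Finsupp.single_zero, zero_add]]
  exact Eg.linY

lemma FGL_X : ∀ i, Fc Eg.F i 0 = if i = 1 then 1 else 0 := by
  intro i
  induction i using Nat.strong_induction_on with
  | _ n ih =>
  rcases Nat.lt_or_ge n 2 with h2 | h2
  · interval_cases n
    · rw [if_neg (by omega)]; exact FGL_g00 Eg
    · rw [if_pos rfl]; exact FGL_g10 Eg
  · rw [if_neg (by omega)]
    have hass : ∑ k ∈ Finset.range (n+0+1), Fc Eg.F k 0 * Fc (Eg.F ^ k) n 0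
        = ∑ k ∈ Finset.range (0+0+1), Fc Eg.F n k * Fc (Eg.F ^ k) 0 0 := Eg.assoc n 0 0
    simp only [Nat.add_zero] at hass
    rw [Finset.sum_range_one, pow_zero, Fc_one, if_pos ⟨rfl, rfl⟩, mul_one] at hass
    rw [Finset.sum_range_succ, Fc_X0b (FGL_g00 Eg) n, FGL_g10, one_pow, mul_one] at hass
    have hrest : ∑ k ∈ Finset.range n, Fc Eg.F k 0 * Fc (Eg.F ^ k) n 0 = Fc Eg.F n 0 := by
      rw [Finset.sum_eq_single_of_mem 1 (Finset.mem_range.mpr (by omega))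
        (fun k hk hne => by rw [ih k (Finset.mem_range.mp hk), if_neg hne, zero_mul])]
      rw [pow_one, FGL_g10, one_mul]
    rw [hrest] at hass
    linear_combination hass

lemma FGL_Y : ∀ b, Fc Eg.F 0 b = if b = 1 then 1 else 0 := by
  intro b
  have hswap : Finsupp.equivMapDomain (Equiv.swap (0 : Fin 2) 1) (pr b 0) = pr 0 b := by
    ext x
    fin_cases x <;>
      simp [pr, Finsupp.single_apply, Finsupp.equivMapDomain_apply, Equiv.swap_apply_def]
  have hc := Eg.comm (pr b 0)
  rw [hswap] at hc
  show Fc Eg.F 0 b = _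
  rw [Fc, ← hc]
  exact FGL_X Eg b

end FGLfacts
-- ===== Section 5: Lemma A =====
section LemA
variable {K : Type} [Field K] {V : DVF K} {Eg : FGL K V}

lemma lemA (P : Isog V Eg Eg) {p e : ℕ} (hp : p.Prime)
    (hvp : V.v (p : K) = ((e : ℤ) : WithTop ℤ))
    (hD : PowerSeries.coeff (R := K) 1 P.φ = (p : K)) :
    ∀ n : ℕ, 1 ≤ n → ((e : ℤ) : WithTop ℤ) ≤ V.v ((n : K) * PowerSeries.coeff (R := K) n P.φ) := by
  intro n
  induction n using Nat.strong_induction_on with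
  | _ n ih =>
  intro hn
  rcases eq_or_lt_of_le hn with h1 | h1
  · rw [← h1, Nat.cast_one, one_mul, hD, hvp]
  · have hF0 := FGL_Y Eg
    have hhom : (∑ k ∈ Finset.range (1+(n-1)+1),
          PowerSeries.coeff (R := K) k P.φ * Fc (Eg.F ^ k) 1 (n-1))
        = ∑ k ∈ Finset.range (1+(n-1)+1), ∑ l ∈ Finset.range (1+(n-1)+1),
            Fc Eg.F k l * PowerSeries.coeff (R := K) 1 (P.φ ^ k)
              * PowerSeries.coeff (R := K) (n-1) (P.φ ^ l) := P.hom 1 (n-1)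
    rw [show 1+(n-1)+1 = n+1 from by omega] at hhom
    have hL : ∀ k, PowerSeries.coeff (R := K) k P.φ * Fc (Eg.F ^ k) 1 (n-1)
        = PowerSeries.coeff (R := K) k P.φ
            * (if 1 ≤ k ∧ k ≤ n then (k : K) * Fc Eg.F 1 (n-k) else 0) := by
      intro k
      rw [Fc_E2 hF0 k (n-1), show n-1+1 = n from by omega]
    rw [Finset.sum_congr rfl (fun k _ => hL k), Finset.sum_range_succ,
      if_pos ⟨by omega, le_refl n⟩, Nat.sub_self, FGL_g10 Eg, mul_one] at hhom
    have key : (n : K) * PowerSeries.coeff (R := K) n P.φ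
        = (∑ k ∈ Finset.range (n+1), ∑ l ∈ Finset.range (n+1),
            Fc Eg.F k l * PowerSeries.coeff (R := K) 1 (P.φ ^ k)
              * PowerSeries.coeff (R := K) (n-1) (P.φ ^ l))
          - ∑ k ∈ Finset.range n, PowerSeries.coeff (R := K) k P.φ
              * (if 1 ≤ k ∧ k ≤ n then (k : K) * Fc Eg.F 1 (n-k) else 0) := by
      rw [← hhom]; ring
    rw [key]
    refine le_trans (le_min ?_ ?_) (V.v_sub_ge _ _)
    · apply V.v_sum_ge; intro k _; apply V.v_sum_ge; intro l _
      rcases Nat.eq_zero_or_pos k with hk0 | hk1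
      · subst hk0
        rw [pow_zero, PowerSeries.coeff_one, if_neg (by omega), mul_zero, zero_mul, V.v_zero]
        exact le_top
      rcases eq_or_lt_of_le (show 1 ≤ k from hk1) with hk1' | hk2
      · rw [← hk1', pow_one, hD, V.v_mul, V.v_mul, hvp]
        have h1 : 0 ≤ V.v (Fc Eg.F 1 l) := Eg.int_coeff _
        have h2 : 0 ≤ V.v (PowerSeries.coeff (R := K) (n-1) (P.φ ^ l)) :=
          V.v_coeff_pow_nonneg P.int_coeff l _
        have := add_le_add (add_le_add h1 (le_refl ((e : ℤ) : WithTop ℤ))) h2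
        simpa using this
      · rw [ps_coeff_pow_lt P.const k 1 hk2, mul_zero, zero_mul, V.v_zero]
        exact le_top
    · apply V.v_sum_ge; intro k hk
      rcases Nat.eq_zero_or_pos k with hk0 | hk1
      · subst hk0
        rw [if_neg (by omega), mul_zero, V.v_zero]
        exact le_top
      · have hkn := Finset.mem_range.mp hk
        rw [if_pos ⟨hk1, by omega⟩,
          show PowerSeries.coeff (R := K) k P.φ * ((k:K) * Fc Eg.F 1 (n-k))
            = ((k:K) * PowerSeries.coeff (R := K) k P.φ) * Fc Eg.F 1 (n-k) from by ring,
          V.v_mul]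
        exact le_trans (ih k hkn hk1) (le_add_of_nonneg_right (Eg.int_coeff _))

lemma lemA' (P : Isog V Eg Eg) {p e : ℕ} (hp : p.Prime)
    (hres : 0 < V.v (p : K))
    (hvp : V.v (p : K) = ((e : ℤ) : WithTop ℤ))
    (hD : PowerSeries.coeff (R := K) 1 P.φ = (p : K))
    {n : ℕ} (hn : 1 ≤ n) (hnd : ¬ p ∣ n) :
    ((e : ℤ) : WithTop ℤ) ≤ V.v (PowerSeries.coeff (R := K) n P.φ) := by
  have h := lemA P hp hvp hD n hn
  rwa [V.v_mul, V.v_natCast_coprime hp hres hnd, zero_add] at h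
end LemA
-- ===== Section 6: valuation ring, residue ring, Frobenius lemma =====
set_option maxHeartbeats 1600000
set_option synthInstance.maxHeartbeats 200000
section Frob
variable {K : Type} [Field K] (V : DVF K)

noncomputable def OO : Subring K where
  carrier := {x | 0 ≤ V.v x}
  mul_mem' := fun ha hb => by
    rw [Set.mem_setOf_eq, V.v_mul]
    exact add_nonneg ha hb
  one_mem' := by rw [Set.mem_setOf_eq, V.v_one]
  add_mem' := fun ha hb => le_trans (le_min ha hb) (V.v_add _ _)
  zero_mem' := by rw [Set.mem_setOf_eq, V.v_zero]; exact le_top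
  neg_mem' := fun ha => by rw [Set.mem_setOf_eq, V.v_neg]; exact ha

lemma OO_val_nonneg (x : OO V) : 0 ≤ V.v (x : K) := x.2

noncomputable def II (e : ℕ) : Ideal (OO V) where
  carrier := {x | ((e : ℤ) : WithTop ℤ) ≤ V.v (x : K)}
  add_mem' := fun {a b} ha hb => by
    show ((e : ℤ) : WithTop ℤ) ≤ V.v ((a + b : OO V) : K)
    rw [Subring.coe_add]
    exact le_trans (le_min ha hb) (V.v_add _ _)
  zero_mem' := by
    show ((e : ℤ) : WithTop ℤ) ≤ V.v ((0 : OO V) : K)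
    rw [ZeroMemClass.coe_zero, V.v_zero]
    exact le_top
  smul_mem' := fun r x hx => by
    show ((e : ℤ) : WithTop ℤ) ≤ V.v ((r • x : OO V) : K)
    rw [smul_eq_mul, Subring.coe_mul, V.v_mul]
    calc ((e : ℤ) : WithTop ℤ) ≤ V.v (x : K) := hx
    _ ≤ V.v (r : K) + V.v (x : K) := le_add_of_nonneg_left r.2

lemma II_mem_iff (e : ℕ) (x : OO V) :
    x ∈ II V e ↔ ((e : ℤ) : WithTop ℤ) ≤ V.v (x : K) := Iff.rfl

lemma RR_charP {p e : ℕ} (hp : p.Prime) (he : 0 < e) (hres : 0 < V.v (p : K))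
    (hvp : V.v (p : K) = ((e : ℤ) : WithTop ℤ)) :
    CharP ((OO V) ⧸ (II V e)) p := by
  constructor
  intro n
  have hn : ((n : ℕ) : (OO V) ⧸ (II V e)) = Ideal.Quotient.mk (II V e) (n : OO V) := by
    rw [map_natCast]
  rw [hn, Ideal.Quotient.eq_zero_iff_mem, II_mem_iff, Subring.coe_natCast]
  constructor
  · intro h
    by_contra hd
    rw [V.v_natCast_coprime hp hres hd] at h
    have : ¬ ((e : ℤ) : WithTop ℤ) ≤ 0 := by
      rw [← WithTop.coe_zero, WithTop.coe_le_coe]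
      omega
    exact this h
  · rintro ⟨m, rfl⟩
    push_cast
    rw [V.v_mul, hvp]
    exact le_add_of_nonneg_right (V.v_natCast_nonneg m)

-- truncation of the formal group law to a polynomial over OO
noncomputable def TT (Eg : FGL K V) (D : ℕ) : MvPolynomial (Fin 2) (OO V) :=
  ∑ q ∈ Finset.range (D+1) ×ˢ Finset.range (D+1),
    MvPolynomial.monomial (pr q.1 q.2) (⟨Fc Eg.F q.1 q.2, Eg.int_coeff _⟩ : OO V)

lemma TT_coeff (Eg : FGL K V) (D a b : ℕ) :
    MvPolynomial.coeff (pr a b) (TT V Eg D)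
      = if a ≤ D ∧ b ≤ D then (⟨Fc Eg.F a b, Eg.int_coeff _⟩ : OO V) else 0 := by
  classical
  rw [TT, MvPolynomial.coeff_sum]
  have step : ∀ q ∈ Finset.range (D+1) ×ˢ Finset.range (D+1),
      MvPolynomial.coeff (pr a b)
        (MvPolynomial.monomial (pr q.1 q.2) (⟨Fc Eg.F q.1 q.2, Eg.int_coeff _⟩ : OO V))
      = if q = (a, b) then (⟨Fc Eg.F q.1 q.2, Eg.int_coeff _⟩ : OO V) else 0 := by
    intro q _
    rw [MvPolynomial.coeff_monomial]
    exact if_congr (by rw [pr_eq_iff, Prod.ext_iff]) rfl rfl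
  rw [Finset.sum_congr rfl step, Finset.sum_ite_eq' _ ((a, b) : ℕ × ℕ) _]
  by_cases hab : a ≤ D ∧ b ≤ D
  · rw [if_pos (by rw [Finset.mem_product, Finset.mem_range, Finset.mem_range]; omega),
      if_pos hab]
  · rw [if_neg (by rw [Finset.mem_product, Finset.mem_range, Finset.mem_range]; omega),
      if_neg hab]

-- powers of power series only depend on low-order coefficients
lemma pow_coeff_agree {S : Type*} [CommRing S] (G G' : MvPowerSeries (Fin 2) S)
    (d : Fin 2 →₀ ℕ) (h : ∀ d' ≤ d, MvPowerSeries.coeff (R := S) d' G = MvPowerSeries.coeff (R := S) d' G') :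
    ∀ m, ∀ b ≤ d, MvPowerSeries.coeff (R := S) b (G ^ m) = MvPowerSeries.coeff (R := S) b (G' ^ m) := by
  classical
  intro m
  induction m with
  | zero => intro b _; rw [pow_zero, pow_zero]
  | succ m ih =>
    intro b hb
    rw [pow_succ', pow_succ', MvPowerSeries.coeff_mul, MvPowerSeries.coeff_mul]
    apply Finset.sum_congr rfl
    rintro ⟨u, w⟩ hm
    rw [Finset.HasAntidiagonal.mem_antidiagonal] at hm
    have hu : u ≤ d := le_trans (hm ▸ le_self_add) hb
    have hw : w ≤ d := le_trans (hm ▸ le_add_self) hb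
    rw [h u hu, ih w hw]

-- bridging: coefficients of F^m equal those of TT^m
lemma F_pow_coeff_eq (Eg : FGL K V) (D : ℕ) (m a b : ℕ) (ha : a ≤ D) (hb : b ≤ D) :
    MvPowerSeries.coeff (R := K) (pr a b) (Eg.F ^ m)
      = ((MvPolynomial.coeff (pr a b) ((TT V Eg D) ^ m) : OO V) : K) := by
  have hagree : ∀ d' ≤ pr D D, MvPowerSeries.coeff (R := K) d' Eg.F
      = MvPowerSeries.coeff (R := K) d'
        (((MvPolynomial.map (OO V).subtype (TT V Eg D) : MvPolynomial (Fin 2) K))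
          : MvPowerSeries (Fin 2) K) := by
    intro d' hd'
    have h0 : d' 0 ≤ D := by
      rw [Finsupp.le_def] at hd'
      have := hd' 0
      rwa [pr_apply0] at this
    have h1 : d' 1 ≤ D := by
      rw [Finsupp.le_def] at hd'
      have := hd' 1
      rwa [pr_apply1] at this
    rw [MvPolynomial.coeff_coe, MvPolynomial.coeff_map]
    conv_lhs => rw [eq_pr d']
    conv_rhs => rw [eq_pr d']
    rw [TT_coeff, if_pos ⟨h0, h1⟩]
    rfl
  have hle : pr a b ≤ pr D D := by
    rw [Finsupp.le_def]
    intro i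
    fin_cases i <;> simp [ha, hb]
  have := pow_coeff_agree Eg.F _ _ hagree m (pr a b) hle
  rw [this, ← MvPolynomial.coe_pow, MvPolynomial.coeff_coe, ← map_pow, MvPolynomial.coeff_map]
  rfl

-- the mod-p computation of the key coefficient
lemma frob_key {p e : ℕ} (hp : p.Prime) (he : 0 < e) (hres : 0 < V.v (p : K))
    (hvp : V.v (p : K) = ((e : ℤ) : WithTop ℤ))
    (Eg : FGL K V) {k : ℕ} (hk1 : 1 ≤ k) (hkp : k < p) :
    MvPolynomial.coeff (pr p ((k-1)*p))
        ((MvPolynomial.map (Ideal.Quotient.mk (II V e)) (TT V Eg (p^2))) ^ (k*p))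
      = ((k : ℕ) : (OO V) ⧸ (II V e)) := by
  classical
  haveI : CharP ((OO V) ⧸ (II V e)) p := RR_charP V hp he hres hvp
  haveI : Fact p.Prime := ⟨hp⟩
  set Q := MvPolynomial.map (Ideal.Quotient.mk (II V e)) (TT V Eg (p^2)) with hQ
  have hp2 : 2 ≤ p := hp.two_le
  have hp4 : 2*2 ≤ p^2 := by rw [pow_two]; exact Nat.mul_le_mul hp2 hp2
  -- coefficients of Q
  have hQc : ∀ a b : ℕ, MvPolynomial.coeff (pr a b) Q
      = if a ≤ p^2 ∧ b ≤ p^2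
          then Ideal.Quotient.mk (II V e) (⟨Fc Eg.F a b, Eg.int_coeff _⟩ : OO V) else 0 := by
    intro a b
    rw [hQ, MvPolynomial.coeff_map, TT_coeff]
    split_ifs with h
    · rfl
    · rw [map_zero]
  have hQ0 : ∀ b, Fc (Q : MvPowerSeries (Fin 2) ((OO V) ⧸ (II V e))) 0 b = if b = 1 then 1 else 0 := by
    intro b
    rw [Fc, MvPolynomial.coeff_coe, hQc]
    by_cases hb : b ≤ p^2
    · rw [if_pos ⟨by omega, hb⟩]
      have hval : (⟨Fc Eg.F 0 b, Eg.int_coeff _⟩ : OO V)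
          = if b = 1 then (1 : OO V) else 0 := by
        apply Subtype.ext
        show Fc Eg.F 0 b = ((if b = 1 then (1 : OO V) else 0 : OO V) : K)
        rw [FGL_Y Eg b]
        split_ifs <;> simp
      rw [hval]
      split_ifs
      · rw [map_one]
      · rw [map_zero]
    · rw [if_neg (by omega), if_neg (by omega)]
  -- coefficient of Q^k at (1, k-1)
  have hQk : MvPolynomial.coeff (pr 1 (k-1)) (Q ^ k) = (k : (OO V) ⧸ (II V e)) := by
    have : MvPolynomial.coeff (pr 1 (k-1)) (Q ^ k)
        = Fc ((Q : MvPowerSeries (Fin 2) ((OO V) ⧸ (II V e))) ^ k) 1 (k-1) := by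
      rw [Fc, ← MvPolynomial.coe_pow, MvPolynomial.coeff_coe]
    rw [this, Fc_E2 hQ0 k (k-1), if_pos ⟨hk1, by omega⟩, show k-1+1-k = 0 from by omega]
    have h10 : Fc (Q : MvPowerSeries (Fin 2) ((OO V) ⧸ (II V e))) 1 0 = 1 := by
      rw [Fc, MvPolynomial.coeff_coe, hQc, if_pos ⟨by omega, by omega⟩]
      have hval : (⟨Fc Eg.F 1 0, Eg.int_coeff _⟩ : OO V) = (1 : OO V) := by
        apply Subtype.ext
        show Fc Eg.F 1 0 = ((1 : OO V) : K)
        rw [FGL_g10 Eg]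
        simp
      rw [hval, map_one]
    rw [h10, mul_one]
  -- char p: p-th power
  have hpow : Q ^ (k*p) = (Q ^ k) ^ p := by rw [← pow_mul]
  set f := Q ^ k with hf
  have hfp : f ^ p = ∑ d ∈ f.support,
      MvPolynomial.monomial (p • d) ((MvPolynomial.coeff d f) ^ p) := by
    conv_lhs => rw [MvPolynomial.as_sum f]
    rw [sum_pow_char]
    exact Finset.sum_congr rfl (fun d _ => MvPolynomial.monomial_pow)
  have hcond : ∀ d : Fin 2 →₀ ℕ, (p • d = pr p ((k-1)*p)) ↔ d = pr 1 (k-1) := by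
    intro d
    constructor
    · intro hd
      have h0 := DFunLike.congr_fun hd (0 : Fin 2)
      have h1 := DFunLike.congr_fun hd (1 : Fin 2)
      rw [Finsupp.smul_apply, smul_eq_mul, pr_apply0] at h0
      rw [Finsupp.smul_apply, smul_eq_mul, pr_apply1] at h1
      have e0 : d 0 = 1 := by nlinarith
      have e1 : d 1 = k - 1 := by
        have : p * d 1 = p * (k-1) := by rw [h1]; ring
        exact Nat.eq_of_mul_eq_mul_left (by omega) this
      rw [eq_pr d, e0, e1]
    · rintro rfl
      ext i
      fin_cases i <;>
        simp [Finsupp.smul_apply, mul_comm]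
  have hmain : MvPolynomial.coeff (pr p ((k-1)*p)) (f ^ p)
      = (MvPolynomial.coeff (pr 1 (k-1)) f) ^ p := by
    rw [hfp, MvPolynomial.coeff_sum]
    have step : ∀ d ∈ f.support,
        MvPolynomial.coeff (pr p ((k-1)*p))
          (MvPolynomial.monomial (p • d) ((MvPolynomial.coeff d f) ^ p))
        = if d = pr 1 (k-1) then (MvPolynomial.coeff d f) ^ p else 0 := by
      intro d _
      rw [MvPolynomial.coeff_monomial]
      exact if_congr (hcond d) rfl rfl
    rw [Finset.sum_congr rfl step, Finset.sum_ite_eq' _ (pr 1 (k-1)) _]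
    split_ifs with hmem
    · rfl
    · rw [MvPolynomial.notMem_support_iff.mp hmem, zero_pow hp.ne_zero]
  -- Fermat
  have hfermat : ((k : (OO V) ⧸ (II V e))) ^ p = (k : (OO V) ⧸ (II V e)) := by
    rw [← frobenius_def]
    exact map_natCast (frobenius ((OO V) ⧸ (II V e)) p) k
  rw [hpow, hmain, hQk]
  exact hfermat

-- final Frobenius lemma over K
lemma frob {p e : ℕ} (hp : p.Prime) (he : 0 < e) (hres : 0 < V.v (p : K))
    (hvp : V.v (p : K) = ((e : ℤ) : WithTop ℤ))
    (Eg : FGL K V) {k : ℕ} (hk1 : 1 ≤ k) (hkp : k < p) :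
    ((e : ℤ) : WithTop ℤ) ≤ V.v (Fc (Eg.F ^ (k*p)) p ((k-1)*p) - (k : K)) := by
  have hp2 : 2 ≤ p := hp.two_le
  have hb1 : p ≤ p^2 := by rw [pow_two]; nlinarith
  have hb2 : (k-1)*p ≤ p^2 := by
    rw [pow_two]
    exact Nat.mul_le_mul (by omega) (le_refl p)
  have hA : Fc (Eg.F ^ (k*p)) p ((k-1)*p)
      = ((MvPolynomial.coeff (pr p ((k-1)*p)) ((TT V Eg (p^2)) ^ (k*p)) : OO V) : K) :=
    F_pow_coeff_eq V Eg (p^2) (k*p) p ((k-1)*p) hb1 hb2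
  set c' := MvPolynomial.coeff (pr p ((k-1)*p)) ((TT V Eg (p^2)) ^ (k*p)) with hc'
  have hkK : (k : K) = ((k : OO V) : K) := by rw [Subring.coe_natCast]
  rw [hA, hkK]
  have hsub : (c' : K) - ((k : OO V) : K) = ((c' - (k : OO V) : OO V) : K) := by norm_cast
  rw [hsub]
  have hmem : c' - (k : OO V) ∈ II V e := by
    rw [← Ideal.Quotient.eq_zero_iff_mem, map_sub, map_natCast, sub_eq_zero, hc',
      ← MvPolynomial.coeff_map, map_pow]
    exact frob_key V hp he hres hvp Eg hk1 hkp
  exact hmem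

end Frob
-- ===== Section 7: Lemma B =====
section LemB
variable {K : Type} [Field K] {V : DVF K} {Eg : FGL K V}

lemma lem_cp (P : Isog V Eg Eg) {p e : ℕ} (hp : p.Prime) (hres : 0 < V.v (p : K))
    (hvp : V.v (p : K) = ((e : ℤ) : WithTop ℤ))
    (hD : PowerSeries.coeff (R := K) 1 P.φ = (p : K))
    {s : ℕ} (hs : 2 ≤ s) :
    ((e : ℤ) : WithTop ℤ) ≤ V.v (PowerSeries.coeff (R := K) p (P.φ ^ s)) := by
  obtain ⟨s', rfl⟩ : ∃ s', s = s' + 1 := ⟨s - 1, by omega⟩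
  rw [pow_succ', PowerSeries.coeff_mul]
  apply V.v_sum_ge
  rintro ⟨a, b⟩ hm
  rw [Finset.HasAntidiagonal.mem_antidiagonal] at hm
  rcases Nat.eq_zero_or_pos a with ha0 | ha1
  · subst ha0
    rw [P.const, zero_mul, V.v_zero]
    exact le_top
  by_cases hbs : b < s'
  · rw [ps_coeff_pow_lt P.const s' b hbs, mul_zero, V.v_zero]
    exact le_top
  · have hap : a < p := by omega
    have hca : ((e : ℤ) : WithTop ℤ) ≤ V.v (PowerSeries.coeff (R := K) a P.φ) := by
      rcases eq_or_lt_of_le (show 1 ≤ a from ha1) with h1 | h2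
      · rw [← h1, hD, hvp]
      · refine lemA' P hp hres hvp hD ha1 ?_
        intro hdvd
        exact absurd (Nat.le_of_dvd (by omega) hdvd) (by omega)
    rw [V.v_mul]
    exact le_trans hca (le_add_of_nonneg_right (V.v_coeff_pow_nonneg P.int_coeff s' b))

lemma lemB (P : Isog V Eg Eg) {p e : ℕ} (hp : p.Prime) (he : 0 < e)
    (hres : 0 < V.v (p : K))
    (hvp : V.v (p : K) = ((e : ℤ) : WithTop ℤ))
    (hD : PowerSeries.coeff (R := K) 1 P.φ = (p : K)) :
    ∀ k : ℕ, 1 ≤ k → k < p →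
      min ((e : ℤ) : WithTop ℤ) (V.v (PowerSeries.coeff (R := K) p P.φ))
        ≤ V.v (PowerSeries.coeff (R := K) (k * p) P.φ) := by
  intro k
  induction k using Nat.strong_induction_on with
  | _ k ih =>
  intro hk1 hkp
  rcases eq_or_lt_of_le hk1 with h1 | hk2
  · rw [← h1, one_mul]
    exact min_le_right _ _
  · -- k ≥ 2
    have hhom : (∑ m ∈ Finset.range (p + (k-1)*p + 1),
          PowerSeries.coeff (R := K) m P.φ * Fc (Eg.F ^ m) p ((k-1)*p))
        = ∑ s ∈ Finset.range (p + (k-1)*p + 1), ∑ t ∈ Finset.range (p + (k-1)*p + 1),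
            Fc Eg.F s t * PowerSeries.coeff (R := K) p (P.φ ^ s)
              * PowerSeries.coeff (R := K) ((k-1)*p) (P.φ ^ t) := P.hom p ((k-1)*p)
    have hij : p + (k-1)*p + 1 = k*p + 1 := by
      have h' : k - 1 + 1 = k := by omega
      calc p + (k-1)*p + 1 = ((k-1)+1)*p + 1 := by ring
      _ = k*p + 1 := by rw [h']
    rw [hij, Finset.sum_range_succ] at hhom
    have key : PowerSeries.coeff (R := K) (k*p) P.φ * Fc (Eg.F ^ (k*p)) p ((k-1)*p)
        = (∑ s ∈ Finset.range (k*p + 1), ∑ t ∈ Finset.range (k*p + 1),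
            Fc Eg.F s t * PowerSeries.coeff (R := K) p (P.φ ^ s)
              * PowerSeries.coeff (R := K) ((k-1)*p) (P.φ ^ t))
          - ∑ m ∈ Finset.range (k*p), PowerSeries.coeff (R := K) m P.φ * Fc (Eg.F ^ m) p ((k-1)*p) := by
      rw [← hhom]; ring
    set μ := min ((e : ℤ) : WithTop ℤ) (V.v (PowerSeries.coeff (R := K) p P.φ)) with hμ
    have hμe : μ ≤ ((e : ℤ) : WithTop ℤ) := min_le_left _ _
    have hμA : μ ≤ V.v (PowerSeries.coeff (R := K) (k*p) P.φ * Fc (Eg.F ^ (k*p)) p ((k-1)*p)) := by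
      rw [key]
      refine le_trans (le_min ?_ ?_) (V.v_sub_ge _ _)
      · apply V.v_sum_ge; intro s _; apply V.v_sum_ge; intro t _
        rcases Nat.eq_zero_or_pos s with hs0 | hs1
        · subst hs0
          rw [pow_zero, PowerSeries.coeff_one, if_neg (by omega), mul_zero, zero_mul, V.v_zero]
          exact le_top
        rcases eq_or_lt_of_le (show 1 ≤ s from hs1) with hs1' | hs2
        · rw [← hs1', pow_one, V.v_mul, V.v_mul]
          calc μ ≤ V.v (PowerSeries.coeff (R := K) p P.φ) := min_le_right _ _
          _ ≤ V.v (Fc Eg.F 1 t) + V.v (PowerSeries.coeff (R := K) p P.φ) :=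
              le_add_of_nonneg_left (Eg.int_coeff _)
          _ ≤ _ := le_add_of_nonneg_right (V.v_coeff_pow_nonneg P.int_coeff _ _)
        · rw [V.v_mul, V.v_mul]
          calc μ ≤ ((e : ℤ) : WithTop ℤ) := hμe
          _ ≤ V.v (PowerSeries.coeff (R := K) p (P.φ ^ s)) := lem_cp P hp hres hvp hD hs2
          _ ≤ V.v (Fc Eg.F s t) + V.v (PowerSeries.coeff (R := K) p (P.φ ^ s)) :=
              le_add_of_nonneg_left (Eg.int_coeff _)
          _ ≤ _ := le_add_of_nonneg_right (V.v_coeff_pow_nonneg P.int_coeff _ _)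
      · apply V.v_sum_ge; intro m hm
        have hmk := Finset.mem_range.mp hm
        rcases Nat.eq_zero_or_pos m with hm0 | hm1
        · subst hm0
          rw [P.const, zero_mul, V.v_zero]
          exact le_top
        · have hcm : μ ≤ V.v (PowerSeries.coeff (R := K) m P.φ) := by
            by_cases hdvd : p ∣ m
            · obtain ⟨k', rfl⟩ := hdvd
              have hk'1 : 1 ≤ k' := by
                rcases Nat.eq_zero_or_pos k' with h | h
                · subst h; simp at hm1
                · exact h
              have hk'k : k' < k := by
                by_contra hcon
                push_neg at hcon
                have : k * p ≤ p * k' := by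
                  calc k * p = p * k := by ring
                  _ ≤ p * k' := Nat.mul_le_mul_left p hcon
                omega
              have := ih k' hk'k hk'1 (by omega)
              rwa [show k' * p = p * k' from by ring] at this
            · exact le_trans hμe (lemA' P hp hres hvp hD hm1 hdvd)
          rw [V.v_mul]
          exact le_trans hcm
            (le_add_of_nonneg_right (V.v_coeff_mvpow_nonneg Eg.int_coeff m _))
    have hfr := frob V hp he hres hvp Eg hk1 hkp
    have hkc : PowerSeries.coeff (R := K) (k*p) P.φ * (k : K)
        = PowerSeries.coeff (R := K) (k*p) P.φ * Fc (Eg.F ^ (k*p)) p ((k-1)*p)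
          - PowerSeries.coeff (R := K) (k*p) P.φ
            * (Fc (Eg.F ^ (k*p)) p ((k-1)*p) - (k : K)) := by ring
    have hv2 : μ ≤ V.v (PowerSeries.coeff (R := K) (k*p) P.φ * (k : K)) := by
      rw [hkc]
      refine le_trans (le_min hμA ?_) (V.v_sub_ge _ _)
      rw [V.v_mul]
      calc μ ≤ ((e : ℤ) : WithTop ℤ) := hμe
      _ ≤ V.v (Fc (Eg.F ^ (k*p)) p ((k-1)*p) - (k : K)) := hfr
      _ ≤ _ := le_add_of_nonneg_left (P.int_coeff _)
    have hvk : V.v ((k : K)) = 0 := by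
      refine V.v_natCast_coprime hp hres ?_
      intro hdvd
      exact absurd (Nat.le_of_dvd (by omega) hdvd) (by omega)
    rwa [V.v_mul, hvk, add_zero] at hv2

end LemB
-- ===== Section 8: unique minimal term blocks convergence to 0 =====
lemma no_tendsto_zero {L : Type} [Field L] (W : DVF L) (f : ℕ → L) (j₀ : ℕ) (A : ℤ)
    (hj0 : W.v (f j₀) = (A : WithTop ℤ))
    (hother : ∀ j, j ≠ j₀ → ((A + 1 : ℤ) : WithTop ℤ) ≤ W.v (f j)) :
    ¬ W.Tendsto (fun n => ∑ i ∈ Finset.range n, f i) 0 := by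
  intro hT
  obtain ⟨M, hM⟩ := hT (A + 1)
  have hm := hM (max M (j₀ + 1)) (le_max_left _ _)
  rw [sub_zero] at hm
  have hsplit : ∑ i ∈ Finset.range (max M (j₀ + 1)), f i
      = f j₀ + ∑ i ∈ (Finset.range (max M (j₀ + 1))).erase j₀, f i := by
    rw [Finset.add_sum_erase _ f (Finset.mem_range.mpr (by omega))]
  have hrest : ((A + 1 : ℤ) : WithTop ℤ)
      ≤ W.v (∑ i ∈ (Finset.range (max M (j₀ + 1))).erase j₀, f i) :=
    W.v_sum_ge _ _ _ (fun i hi => hother i (Finset.ne_of_mem_erase hi))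
  have hv : W.v (∑ i ∈ Finset.range (max M (j₀ + 1)), f i) = (A : WithTop ℤ) := by
    rw [hsplit, W.v_add_eq_left, hj0]
    rw [hj0]
    exact lt_of_lt_of_le (by exact_mod_cast (by omega : A < A + 1)) hrest
  rw [hv, WithTop.coe_le_coe] at hm
  omega

/-- Theorem 3.5 (ii), Katz–Lubin. Let `E` be an elliptic curve over a
complete discretely valued field `K` of characteristic 0 with supersingular reduction
(so its formal group `Ê` has height 2), `e = v_K(p)`, and let `a(Ê)` be the coefficient
of `T^p` in the multiplication-by-`p` series `[p](T)` of `Ê` (the isogeny `P : Ê → Ê`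
with `D(P) = p`).  If `v_K(a(Ê)) ≥ pe/(p+1)`, then every nonzero `p`-torsion point
`x ∈ Ê[p]` (lying in a valued extension `L` of `K` with ramification index `r`, so that
`v_K = (1/r)·v_L` on `K`) satisfies `v_K(x) = e/(p²-1)`. -/
theorem stmt16 (p : ℕ) (hp : p.Prime) (K : Type) [Field K] [CharZero K]
    (V : DVF K) (hcomp : V.IsComplete) (hres : 0 < V.v (p : K))
    (e : ℕ) (he : 0 < e) (hvp : V.v (p : K) = ((e : ℤ) : WithTop ℤ))
    (Eg : FGL K V) (P : Isog V Eg Eg)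
    (hD : PowerSeries.coeff (R := K) 1 P.φ = (p : K))
    (hht : HasHeight V p 2 P.φ)
    -- supersingular case hypothesis: v(a(Ê)) ≥ pe/(p+1)
    (hss : (((p * e : ℕ) : ℤ) : WithTop ℤ) ≤ (p + 1) • V.v (PowerSeries.coeff (R := K) p P.φ))
    -- a valued extension L/K (inside K̄) of ramification index r containing the point
    (L : Type) [Field L] (W : DVF L) (ι : K →+* L)
    (r : ℕ) (hr : 0 < r) (hext : ∀ x : K, W.v (ι x) = r • V.v x)
    (x : L) (hx0 : x ≠ 0) (hxm : 0 < W.v x) (hker : PSEvalExt W ι P.φ x 0) :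
    (p ^ 2 - 1) • W.v x = (((r * e : ℕ) : ℤ) : WithTop ℤ) := by
  classical
  have hp2 : 2 ≤ p := hp.two_le
  have hp2' : (2 : ℤ) ≤ (p : ℤ) := by exact_mod_cast hp2
  have hr1 : (1 : ℤ) ≤ (r : ℤ) := by exact_mod_cast hr
  have he1 : (1 : ℤ) ≤ (e : ℤ) := by exact_mod_cast he
  have hp21 : 1 ≤ p^2 := by nlinarith
  -- the valuation of x
  have hxt : W.v x ≠ ⊤ := fun h => hx0 ((W.v_top_iff x).1 h)
  obtain ⟨t, ht⟩ := WithTop.ne_top_iff_exists.mp hxt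
  have ht' : W.v x = (t : WithTop ℤ) := ht.symm
  have ht1 : (1 : ℤ) ≤ t := by
    rw [ht'] at hxm
    exact_mod_cast hxm
  -- transport of valuations along ι
  have hWv : ∀ (y : K) (a : ℤ), V.v y = (a : WithTop ℤ)
      → W.v (ι y) = (((r : ℤ) * a : ℤ) : WithTop ℤ) := fun y a hy => by
    rw [hext, hy, nsmul_coe_int]
  have hWle : ∀ (y : K) (a : ℤ), ((a : ℤ) : WithTop ℤ) ≤ V.v y
      → (((r : ℤ) * a : ℤ) : WithTop ℤ) ≤ W.v (ι y) := fun y a hy => by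
    rw [hext, ← nsmul_coe_int]
    exact nsmul_le_nsmul_right hy r
  have hW0 : ∀ y : K, 0 ≤ V.v y → 0 ≤ W.v (ι y) := fun y hy => by
    have := hWle y 0 (by simpa using hy)
    simpa using this
  -- term valuations (lower bound form)
  have hterml : ∀ (j : ℕ) (a : ℤ), ((a : ℤ) : WithTop ℤ) ≤ W.v (ι (PowerSeries.coeff (R := K) j P.φ))
      → ((a + j * t : ℤ) : WithTop ℤ) ≤ W.v (ι (PowerSeries.coeff (R := K) j P.φ) * x ^ j) := by
    intro j a ha
    rw [W.v_mul, W.v_pow ht' j]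
    calc ((a + j * t : ℤ) : WithTop ℤ) = ((a : ℤ) : WithTop ℤ) + ((j * t : ℤ) : WithTop ℤ) := by
          rw [← WithTop.coe_add]
    _ ≤ _ := add_le_add_left ha _
  -- coefficient facts
  have hc1W : W.v (ι (PowerSeries.coeff (R := K) 1 P.φ)) = (((r : ℤ) * (e : ℤ) : ℤ) : WithTop ℤ) := by
    rw [hD]
    exact hWv _ e hvp
  obtain ⟨ψ, hψint, hψ1, hψj⟩ := hht
  have hcp2K : V.v (PowerSeries.coeff (R := K) (p^2) P.φ) = ((0 : ℤ) : WithTop ℤ) := by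
    have h2 := hψj (p^2)
    rw [if_pos dvd_rfl, Nat.div_self (by omega)] at h2
    have hlt : V.v (PowerSeries.coeff (R := K) 1 ψ)
        < V.v (PowerSeries.coeff (R := K) (p^2) P.φ - PowerSeries.coeff (R := K) 1 ψ) := by
      rw [hψ1]; exact h2
    have hv := V.v_add_eq_left hlt
    rw [show PowerSeries.coeff (R := K) 1 ψ
        + (PowerSeries.coeff (R := K) (p^2) P.φ - PowerSeries.coeff (R := K) 1 ψ)
        = PowerSeries.coeff (R := K) (p^2) P.φ from by ring] at hv
    rw [hv, hψ1]
    simp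
  have hcp2W : W.v (ι (PowerSeries.coeff (R := K) (p^2) P.φ)) = ((0 : ℤ) : WithTop ℤ) := by
    have := hWv _ 0 hcp2K
    simpa using this
  have hF4 : ∀ j : ℕ, 1 ≤ j → ¬ p ∣ j →
      (((r : ℤ) * (e : ℤ) : ℤ) : WithTop ℤ) ≤ W.v (ι (PowerSeries.coeff (R := K) j P.φ)) :=
    fun j hj hdvd => hWle _ e (lemA' P hp hres hvp hD hj hdvd)
  -- the key integer identity
  have key : ((p : ℤ)^2 - 1) * t = (r : ℤ) * (e : ℤ) := by
    rcases lt_trichotomy (((p : ℤ)^2 - 1) * t) ((r : ℤ) * (e : ℤ)) with hlt | heq | hgt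
    · exfalso
      refine no_tendsto_zero W _ (p^2) ((p : ℤ)^2 * t) ?_ ?_ hker
      · show W.v (ι (PowerSeries.coeff (R := K) (p^2) P.φ) * x ^ (p^2)) = _
        rw [W.v_mul, hcp2W, W.v_pow ht', ← WithTop.coe_add]
        congr 1
        push_cast
        ring
      · intro j hj
        show ((_ : ℤ) : WithTop ℤ) ≤ W.v (ι (PowerSeries.coeff (R := K) j P.φ) * x ^ j)
        rcases Nat.eq_zero_or_pos j with rfl | hj1
        · rw [P.const, map_zero, zero_mul, W.v_zero]
          exact le_top
        have hj1' : (1 : ℤ) ≤ (j : ℤ) := by exact_mod_cast hj1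
        by_cases hjbig : p^2 < j
        · refine le_trans ?_ (hterml j 0 (hW0 _ (P.int_coeff j)))
          rw [WithTop.coe_le_coe]
          have hjc : ((p : ℤ)^2 + 1) ≤ (j : ℤ) := by exact_mod_cast hjbig
          have h4 := mul_le_mul_of_nonneg_right hjc (show (0:ℤ) ≤ t by linarith)
          linarith
        · have hjlt : j < p^2 := by omega
          by_cases hdvd : p ∣ j
          · obtain ⟨k, rfl⟩ := hdvd
            have hk1 : 1 ≤ k := by
              rcases Nat.eq_zero_or_pos k with h | h
              · subst h; simp at hj1
              · exact h
            have hkp : k < p := by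
              by_contra hcon
              push_neg at hcon
              have : p * p ≤ p * k := Nat.mul_le_mul_left p hcon
              rw [← pow_two] at this
              omega
            have hk1' : (1 : ℤ) ≤ (k : ℤ) := by exact_mod_cast hk1
            have hB := lemB P hp he hres hvp hD k hk1 hkp
            rw [mul_comm k p] at hB
            rcases le_total ((e : ℤ) : WithTop ℤ) (V.v (PowerSeries.coeff (R := K) p P.φ))
              with hmin | hmin
            · rw [min_eq_left hmin] at hB
              refine le_trans ?_ (hterml (p*k) ((r : ℤ) * (e : ℤ)) (hWle _ e hB))
              rw [WithTop.coe_le_coe]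
              push_cast
              have h4 : t ≤ (p:ℤ)*(k:ℤ)*t := by
                nlinarith [mul_nonneg (show (0:ℤ) ≤ (p:ℤ)*(k:ℤ) - 1 by nlinarith)
                  (show (0:ℤ) ≤ t by linarith)]
              linarith
            · rw [min_eq_right hmin] at hB
              rcases eq_or_ne (V.v (PowerSeries.coeff (R := K) p P.φ)) ⊤ with hcp | hcpne
              · rw [hcp] at hB
                have h0 : PowerSeries.coeff (R := K) (p*k) P.φ = 0 :=
                  (V.v_top_iff _).1 (top_le_iff.mp hB)
                rw [h0, map_zero, zero_mul, W.v_zero]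
                exact le_top
              · obtain ⟨δ, hδ⟩ := WithTop.ne_top_iff_exists.mp hcpne
                have hcp : V.v (PowerSeries.coeff (R := K) p P.φ) = ((δ : ℤ) : WithTop ℤ) := hδ.symm
                rw [hcp] at hB
                have hd := hWle _ δ hB
                refine le_trans ?_ (hterml (p*k) ((r : ℤ) * δ) hd)
                rw [WithTop.coe_le_coe]
                push_cast
                have hss' : (p : ℤ) * (e : ℤ) ≤ ((p : ℤ) + 1) * δ := by
                  rw [hcp, nsmul_coe_int] at hss
                  rw [WithTop.coe_le_coe] at hss
                  push_cast at hss
                  linarith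
                have h1 : (r : ℤ) * ((p : ℤ) * (e : ℤ)) ≤ (r : ℤ) * (((p : ℤ) + 1) * δ) :=
                  mul_le_mul_of_nonneg_left hss' (by linarith)
                have h2 : ((p : ℤ)^2 - 1) * t + 1 ≤ (r : ℤ) * (e : ℤ) := by linarith
                have h3 : (p : ℤ) * t ≤ (p : ℤ) * (k : ℤ) * t := by
                  nlinarith [mul_nonneg (mul_nonneg (show (0:ℤ) ≤ (p:ℤ) by linarith)
                    (show (0:ℤ) ≤ (k:ℤ) - 1 by linarith)) (show (0:ℤ) ≤ t by linarith)]
                by_contra hcon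
                push_neg at hcon
                have hcon' : (r:ℤ)*δ + (p:ℤ)*(k:ℤ)*t ≤ (p:ℤ)^2*t := by linarith
                have hA := mul_le_mul_of_nonneg_left h2 (show (0:ℤ) ≤ (p:ℤ) by linarith)
                have hC := mul_le_mul_of_nonneg_left h3 (show (0:ℤ) ≤ (p:ℤ)+1 by linarith)
                have hDD := mul_le_mul_of_nonneg_left hcon' (show (0:ℤ) ≤ (p:ℤ)+1 by linarith)
                nlinarith [hA, h1, hC, hDD]
          · refine le_trans ?_ (hterml j ((r : ℤ) * (e : ℤ)) (hF4 j hj1 hdvd))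
            rw [WithTop.coe_le_coe]
            have h4 : t ≤ (j:ℤ)*t := by
              nlinarith [mul_nonneg (show (0:ℤ) ≤ (j:ℤ) - 1 by linarith)
                (show (0:ℤ) ≤ t by linarith)]
            linarith
    · exact heq
    · exfalso
      refine no_tendsto_zero W _ 1 ((r : ℤ) * (e : ℤ) + t) ?_ ?_ hker
      · show W.v (ι (PowerSeries.coeff (R := K) 1 P.φ) * x ^ 1) = _
        rw [W.v_mul, hc1W, W.v_pow ht', ← WithTop.coe_add]
        congr 1
        push_cast
        ring
      · intro j hj
        show ((_ : ℤ) : WithTop ℤ) ≤ W.v (ι (PowerSeries.coeff (R := K) j P.φ) * x ^ j)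
        rcases Nat.eq_zero_or_pos j with rfl | hj1
        · rw [P.const, map_zero, zero_mul, W.v_zero]
          exact le_top
        have hj2 : 2 ≤ j := by omega
        have hj2' : (2 : ℤ) ≤ (j : ℤ) := by exact_mod_cast hj2
        by_cases hjbig : p^2 ≤ j
        · refine le_trans ?_ (hterml j 0 (hW0 _ (P.int_coeff j)))
          rw [WithTop.coe_le_coe]
          have hjc : ((p : ℤ)^2) ≤ (j : ℤ) := by exact_mod_cast hjbig
          have h4 := mul_le_mul_of_nonneg_right hjc (show (0:ℤ) ≤ t by linarith)
          linarith
        · by_cases hdvd : p ∣ j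
          · obtain ⟨k, rfl⟩ := hdvd
            have hk1 : 1 ≤ k := by
              rcases Nat.eq_zero_or_pos k with h | h
              · subst h; simp at hj1
              · exact h
            have hkp : k < p := by
              by_contra hcon
              push_neg at hcon
              have : p * p ≤ p * k := Nat.mul_le_mul_left p hcon
              rw [← pow_two] at this
              omega
            have hk1' : (1 : ℤ) ≤ (k : ℤ) := by exact_mod_cast hk1
            have hB := lemB P hp he hres hvp hD k hk1 hkp
            rw [mul_comm k p] at hB
            rcases le_total ((e : ℤ) : WithTop ℤ) (V.v (PowerSeries.coeff (R := K) p P.φ))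
              with hmin | hmin
            · rw [min_eq_left hmin] at hB
              refine le_trans ?_ (hterml (p*k) ((r : ℤ) * (e : ℤ)) (hWle _ e hB))
              rw [WithTop.coe_le_coe]
              push_cast
              have hpk2 : (2:ℤ) ≤ (p:ℤ)*(k:ℤ) := by nlinarith
              have h4 := mul_le_mul_of_nonneg_right hpk2 (show (0:ℤ) ≤ t by linarith)
              linarith
            · rw [min_eq_right hmin] at hB
              rcases eq_or_ne (V.v (PowerSeries.coeff (R := K) p P.φ)) ⊤ with hcp | hcpne
              · rw [hcp] at hB
                have h0 : PowerSeries.coeff (R := K) (p*k) P.φ = 0 :=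
                  (V.v_top_iff _).1 (top_le_iff.mp hB)
                rw [h0, map_zero, zero_mul, W.v_zero]
                exact le_top
              · obtain ⟨δ, hδ⟩ := WithTop.ne_top_iff_exists.mp hcpne
                have hcp : V.v (PowerSeries.coeff (R := K) p P.φ) = ((δ : ℤ) : WithTop ℤ) := hδ.symm
                rw [hcp] at hB
                have hd := hWle _ δ hB
                refine le_trans ?_ (hterml (p*k) ((r : ℤ) * δ) hd)
                rw [WithTop.coe_le_coe]
                push_cast
                have hss' : (p : ℤ) * (e : ℤ) ≤ ((p : ℤ) + 1) * δ := by
                  rw [hcp, nsmul_coe_int] at hss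
                  rw [WithTop.coe_le_coe] at hss
                  push_cast at hss
                  linarith
                have h1 : (r : ℤ) * ((p : ℤ) * (e : ℤ)) ≤ (r : ℤ) * (((p : ℤ) + 1) * δ) :=
                  mul_le_mul_of_nonneg_left hss' (by linarith)
                have h2 : (r : ℤ) * (e : ℤ) + 1 ≤ ((p : ℤ)^2 - 1) * t := by linarith
                have h3 : (p : ℤ) * t ≤ (p : ℤ) * (k : ℤ) * t := by
                  nlinarith [mul_nonneg (mul_nonneg (show (0:ℤ) ≤ (p:ℤ) by linarith)
                    (show (0:ℤ) ≤ (k:ℤ) - 1 by linarith)) (show (0:ℤ) ≤ t by linarith)]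
                by_contra hcon
                push_neg at hcon
                have hcon' : (r:ℤ)*δ + (p:ℤ)*(k:ℤ)*t ≤ (r:ℤ)*(e:ℤ) + t := by linarith
                have hC := mul_le_mul_of_nonneg_left h3 (show (0:ℤ) ≤ (p:ℤ)+1 by linarith)
                have hDD := mul_le_mul_of_nonneg_left hcon' (show (0:ℤ) ≤ (p:ℤ)+1 by linarith)
                nlinarith [h1, h2, hC, hDD]
          · refine le_trans ?_ (hterml j ((r : ℤ) * (e : ℤ)) (hF4 j hj1 hdvd))
            rw [WithTop.coe_le_coe]
            have h4 := mul_le_mul_of_nonneg_right hj2' (show (0:ℤ) ≤ t by linarith)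
            linarith
  -- conclude
  have key' : ((p^2 - 1 : ℕ) : ℤ) * t = ((r * e : ℕ) : ℤ) := by
    rw [show ((p^2 - 1 : ℕ) : ℤ) = (p : ℤ)^2 - 1 from by
      push_cast [Nat.cast_sub hp21]; ring]
    push_cast
    linarith [key]
  rw [ht', nsmul_coe_int]
  exact_mod_cast congrArg (fun z : ℤ => (z : WithTop ℤ)) key'
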